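/- Let X be a compact Hausdorff space, A a C(X)-algebra, and B ⊆ A a C(X)-subalgebra. Let a ∈ A and δ > 0. If for every x ∈ X the fiber image a(x) lies within distance δ of π_x(B), then a lies within distance δ of B. -/

import Mathlib

set_option linter.unusedSectionVars false

variable {X : Type*} [TopologicalSpace X] [CompactSpace X] [T2Space X]
variable {A : Type*} [NonUnitalCStarAlgebra A]
variable [Module C(X, ℂ) A] [IsScalarTower C(X, ℂ) A A] [SMulCommClass C(X, ℂ) A A]
variable [StarModule C(X, ℂ) A]

def fiberIdeal (S : Set X) (A : Type*) [NonUnitalCStarAlgebra A] [Module C(X, ℂ) A] :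
    Set A :=
  closure (Submodule.span ℂ
    {y : A | ∃ (f : C(X, ℂ)) (c : A), (∀ x ∈ S, f x = 0) ∧ y = f • c} : Set A)

def SOS (A : Type*) [NonUnitalCStarAlgebra A] : AddSubmonoid A :=
  AddSubmonoid.closure {x : A | ∃ w, x = star w * w}

def IsNN (f : C(X, ℂ)) : Prop := ∀ z, (f z).im = 0 ∧ 0 ≤ (f z).re

lemma norm_star_mul_self_le_add {A : Type*} [NonUnitalCStarAlgebra A] (s : A) {p : A}
    (hp : p ∈ SOS A) :
    ‖star s * s‖ ≤ ‖star s * s + p‖ := by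
  letI : PartialOrder (Unitization ℂ A) := CStarAlgebra.spectralOrder _
  haveI : StarOrderedRing (Unitization ℂ A) := CStarAlgebra.spectralOrderedRing _

  have hnn : (0 : Unitization ℂ A) ≤ ((p : Unitization ℂ A)) := by
    induction hp using AddSubmonoid.closure_induction with
    | mem x hx =>
      obtain ⟨w, rfl⟩ := hx
      rw [Unitization.inr_mul, Unitization.inr_star]
      exact star_mul_self_nonneg _
    | zero => simp
    | add x y _ _ hx hy => rw [Unitization.inr_add]; exact add_nonneg hx hy
  have h1 : (0 : Unitization ℂ A) ≤ ((star s * s : A) : Unitization ℂ A) := by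
    rw [Unitization.inr_mul, Unitization.inr_star]
    exact star_mul_self_nonneg _
  have h2 : ((star s * s : A) : Unitization ℂ A) ≤ ((star s * s + p : A) : Unitization ℂ A) := by
    rw [Unitization.inr_add]
    exact le_add_of_nonneg_right hnn
  have := CStarAlgebra.norm_le_norm_of_nonneg_of_le h1 h2
  simpa only [Unitization.norm_inr] using this

lemma isNN_smul_sq (f : C(X, ℂ)) (hf : IsNN f) (u : A) :
    ∃ w : A, f • (star u * u) = star w * w := by
  set g : C(X, ℂ) := ⟨fun z => (Real.sqrt ((f z).re) : ℂ), by fun_prop⟩ with hg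
  have hgstar : star g = g := by
    ext z
    simp [g, Complex.conj_ofReal]
  have hgg : g * g = f := by
    ext z
    simp only [ContinuousMap.mul_apply, ContinuousMap.coe_mk, g]
    rw [← Complex.ofReal_mul, Real.mul_self_sqrt (hf z).2]
    exact Complex.ext rfl ((hf z).1).symm
  refine ⟨g • u, ?_⟩
  rw [star_smul, hgstar, smul_mul_assoc, mul_smul_comm, smul_smul, hgg]

lemma isNN_mul {f g : C(X, ℂ)} (hf : IsNN f) (hg : IsNN g) : IsNN (f * g) := by
  intro z
  obtain ⟨h1, h2⟩ := hf z
  obtain ⟨h3, h4⟩ := hg z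
  simp only [ContinuousMap.mul_apply, Complex.mul_im, Complex.mul_re, h1, h3]
  constructor
  · ring
  · nlinarith

lemma isNN_half {f : C(X, ℂ)} (hf : IsNN f) : IsNN ((2⁻¹ : ℂ) • f) := by
  intro z
  obtain ⟨h1, h2⟩ := hf z
  simp only [ContinuousMap.smul_apply, smul_eq_mul]
  constructor
  · simp [Complex.mul_im, h1]
  · rw [Complex.mul_re]
    simp [h1]
    positivity

lemma smul_sq_mem_SOS {f : C(X, ℂ)} (hf : IsNN f) (u : A) : f • (star u * u) ∈ SOS A := by
  obtain ⟨w, hw⟩ := isNN_smul_sq f hf u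
  rw [hw]
  exact AddSubmonoid.subset_closure ⟨w, rfl⟩

lemma norm_smul_le_one (f : C(X, ℂ)) (hf : ‖f‖ ≤ 1) (v : A) : ‖f • v‖ ≤ ‖v‖ := by
  have hq : IsNN (star f * f) := by
    intro z
    simp only [ContinuousMap.mul_apply, ContinuousMap.star_apply, Complex.star_def]
    constructor
    · simp [Complex.mul_im]; ring
    · rw [Complex.mul_re]
      simp only [Complex.conj_re, Complex.conj_im]
      nlinarith [sq_nonneg (f z).re, sq_nonneg (f z).im]
  have hq1 : IsNN (1 - star f * f) := by
    intro z
    have hz : ‖f z‖ ≤ 1 := by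
      calc ‖f z‖ = ‖f z‖ := rfl
        _ ≤ ‖f‖ := ContinuousMap.norm_coe_le_norm f z
        _ ≤ 1 := hf
    have h2 : Complex.normSq (f z) ≤ 1 := by
      rw [← Complex.sq_norm]; nlinarith [norm_nonneg (f z)]
    constructor
    · simp [Complex.mul_im, Complex.star_def]; ring
    · simp only [ContinuousMap.sub_apply, ContinuousMap.one_apply, ContinuousMap.mul_apply,
        ContinuousMap.star_apply, Complex.star_def, Complex.sub_re, Complex.one_re, Complex.mul_re,
        Complex.conj_re, Complex.conj_im]
      rw [Complex.normSq_apply] at h2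
      nlinarith
  obtain ⟨w₁, hw₁⟩ := isNN_smul_sq (star f * f) hq v
  obtain ⟨w₂, hw₂⟩ := isNN_smul_sq (1 - star f * f) hq1 v
  have key : star w₁ * w₁ + star w₂ * w₂ = star v * v := by
    rw [← hw₁, ← hw₂, ← add_smul, add_sub_cancel, one_smul]
  have h1 : ‖star (f • v) * (f • v)‖ = ‖star w₁ * w₁‖ := by
    rw [star_smul, smul_mul_assoc, mul_smul_comm, smul_smul, hw₁]
  have h2 : ‖star w₁ * w₁‖ ≤ ‖star v * v‖ := by
    rw [← key]
    exact norm_star_mul_self_le_add w₁ (AddSubmonoid.subset_closure ⟨w₂, rfl⟩)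
  have h3 : ‖f • v‖ * ‖f • v‖ ≤ ‖v‖ * ‖v‖ := by
    rw [← CStarRing.norm_star_mul_self, ← CStarRing.norm_star_mul_self (x := v)]
    rw [h1] at *
    linarith [h2]
  nlinarith [norm_nonneg (f • v), norm_nonneg v, h3]

lemma const_rat_smul (q : ℚ) (v : A) :
    (ContinuousMap.const X ((q : ℂ))) • v = (q : ℂ) • v := by
  have h1 : ContinuousMap.const X ((q : ℂ)) = ((q : ℂ)) • (1 : C(X, ℂ)) := by
    ext z; simp
  have := map_ratCast_smul (AddMonoidHom.mk' (fun f : C(X, ℂ) => f • v)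
    (fun f g => add_smul f g v)) ℂ ℂ q (1 : C(X, ℂ))
  simpa [h1, one_smul] using this

lemma const_real_smul (s : ℝ) (v : A) :
    (ContinuousMap.const X ((s : ℂ))) • v = (s : ℂ) • v := by
  have key : ∀ ε > (0:ℝ), ‖(ContinuousMap.const X ((s : ℂ))) • v - (s : ℂ) • v‖ ≤ ε * (‖v‖ + 1) := by
    intro ε hε
    obtain ⟨q, hq1, hq2⟩ := exists_rat_btwn (show s - ε/2 < s by linarith)
    have habs : |s - q| < ε/2 := by
      rw [abs_lt]; constructor <;> linarith
    obtain ⟨q₂, hq₂1, hq₂2⟩ := exists_rat_btwn (show |s - q| < ε/2 by exact habs)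
    have hq₂pos : (0:ℝ) < q₂ := lt_of_le_of_lt (abs_nonneg _) hq₂1
    -- const (s - q) = const q₂ * u with ‖u‖ ≤ 1
    set u : C(X, ℂ) := ContinuousMap.const X ((((s - q)/q₂ : ℝ) : ℂ))
    have hu : ‖u‖ ≤ 1 := by
      refine (ContinuousMap.norm_le _ zero_le_one).mpr fun z => ?_
      simp only [u, ContinuousMap.const_apply, Complex.norm_real]
      rw [Real.norm_eq_abs, abs_div, abs_of_pos hq₂pos, div_le_one hq₂pos]
      exact le_of_lt hq₂1
    have hfactor : ContinuousMap.const X (((s - q : ℝ) : ℂ))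
        = ContinuousMap.const X (((q₂ : ℚ) : ℂ)) * u := by
      ext z
      simp only [ContinuousMap.const_apply, ContinuousMap.mul_apply, u]
      rw [← Complex.ofReal_ratCast, ← Complex.ofReal_mul]
      congr 1
      field_simp
    have hsplit : (ContinuousMap.const X ((s : ℂ))) • v - (s : ℂ) • v
        = (ContinuousMap.const X (((s - q:ℝ) : ℂ))) • v - (((s - q : ℝ)) : ℂ) • v := by
      have e1 : ContinuousMap.const X ((s:ℂ)) = ContinuousMap.const X (((s - q:ℝ) : ℂ))
          + ContinuousMap.const X (((q:ℚ):ℂ)) := by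
        ext z
        simp only [ContinuousMap.const_apply, ContinuousMap.add_apply]
        push_cast; ring
      rw [e1, add_smul, const_rat_smul]
      have : ((s:ℂ)) • v = (((s - q:ℝ)):ℂ) • v + (((q:ℚ):ℂ)) • v := by
        rw [← add_smul]; congr 1; push_cast; ring
      rw [this]
      abel
    rw [hsplit]
    have h1 : ‖(ContinuousMap.const X (((s - q:ℝ) : ℂ))) • v‖ ≤ (q₂:ℝ) * ‖v‖ := by
      rw [hfactor, mul_smul, const_rat_smul]
      rw [norm_smul]
      simp only [Complex.norm_ratCast]
      calc |(q₂:ℝ)| * ‖u • v‖ ≤ |(q₂:ℝ)| * ‖v‖ := by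
            apply mul_le_mul_of_nonneg_left (norm_smul_le_one u hu v) (abs_nonneg _)
        _ = (q₂:ℝ) * ‖v‖ := by rw [abs_of_pos hq₂pos]
    have h2 : ‖(((s - q : ℝ)) : ℂ) • v‖ ≤ (ε/2) * ‖v‖ := by
      rw [norm_smul]
      simp only [Complex.norm_real, Real.norm_eq_abs]
      exact mul_le_mul_of_nonneg_right habs.le (norm_nonneg v)
    calc ‖_ - _‖ ≤ ‖(ContinuousMap.const X (((s - q:ℝ) : ℂ))) • v‖ + ‖(((s - q : ℝ)) : ℂ) • v‖ :=
          norm_sub_le _ _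
      _ ≤ (q₂:ℝ) * ‖v‖ + (ε/2) * ‖v‖ := add_le_add h1 h2
      _ ≤ ε * (‖v‖ + 1) := by nlinarith [norm_nonneg v, hq₂2, hq₂1, abs_nonneg (s - q)]
  have : ‖(ContinuousMap.const X ((s : ℂ))) • v - (s : ℂ) • v‖ ≤ 0 := by
    by_contra hcon
    push_neg at hcon
    set c := ‖(ContinuousMap.const X ((s : ℂ))) • v - (s : ℂ) • v‖
    have hv1 : (0:ℝ) < ‖v‖ + 1 := by positivity
    have h2 : c ≤ c / 2 := by
      calc c ≤ (c / (2 * (‖v‖ + 1))) * (‖v‖ + 1) := key (c/(2*(‖v‖+1))) (by positivity)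
        _ = c / 2 := by field_simp
    linarith
  have := le_antisymm this (norm_nonneg _)
  rwa [norm_eq_zero, sub_eq_zero] at this

lemma norm_smul_le' (f : C(X, ℂ)) (v : A) : ‖f • v‖ ≤ ‖f‖ * ‖v‖ := by
  rcases eq_or_ne f 0 with rfl | hf
  · simp
  have hpos : 0 < ‖f‖ := norm_pos_iff.mpr hf
  set u : C(X, ℂ) := (((‖f‖⁻¹ : ℝ)) : ℂ) • f
  have hu : ‖u‖ ≤ 1 := by
    rw [norm_smul]
    simp only [u, Complex.norm_real, norm_inv, Real.norm_eq_abs, abs_of_pos hpos]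
    rw [inv_mul_cancel₀ (ne_of_gt hpos)]
  have hfe : f = ContinuousMap.const X ((‖f‖ : ℂ)) * u := by
    ext z
    simp only [ContinuousMap.mul_apply, ContinuousMap.const_apply, ContinuousMap.smul_apply, u]
    rw [smul_eq_mul, ← mul_assoc, ← Complex.ofReal_mul, mul_inv_cancel₀ (ne_of_gt hpos)]
    simp
  calc ‖f • v‖ = ‖(ContinuousMap.const X ((‖f‖ : ℂ))) • (u • v)‖ := by
        rw [smul_smul, ← hfe]
    _ = ‖((‖f‖ : ℂ)) • (u • v)‖ := by rw [const_real_smul]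
    _ = ‖f‖ * ‖u • v‖ := by rw [norm_smul]; simp
    _ ≤ ‖f‖ * ‖v‖ := mul_le_mul_of_nonneg_left (norm_smul_le_one u hu v) (le_of_lt hpos)

lemma sq_decomp (a : A) (ha : IsSelfAdjoint a) :
    ∃ y z : A, a = y * y - z * z := by
  have hc1 : Continuous (fun t : ℝ => Real.sqrt (max t 0)) :=
    Real.continuous_sqrt.comp (continuous_id.max continuous_const)
  have hc2 : Continuous (fun t : ℝ => Real.sqrt (max (-t) 0)) :=
    Real.continuous_sqrt.comp (continuous_neg.max continuous_const)
  refine ⟨cfcₙ (fun t : ℝ => Real.sqrt (max t 0)) a,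
    cfcₙ (fun t : ℝ => Real.sqrt (max (-t) 0)) a, ?_⟩
  rw [← cfcₙ_mul (fun t : ℝ => Real.sqrt (max t 0)) (fun t : ℝ => Real.sqrt (max t 0)) a
      (hc1.continuousOn) (by simp) (hc1.continuousOn) (by simp),
    ← cfcₙ_mul (fun t : ℝ => Real.sqrt (max (-t) 0)) (fun t : ℝ => Real.sqrt (max (-t) 0)) a
      (hc2.continuousOn) (by simp) (hc2.continuousOn) (by simp),
    ← cfcₙ_sub (fun t : ℝ => Real.sqrt (max t 0) * Real.sqrt (max t 0))
      (fun t : ℝ => Real.sqrt (max (-t) 0) * Real.sqrt (max (-t) 0)) a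
      ((hc1.mul hc1).continuousOn) (by simp) ((hc2.mul hc2).continuousOn) (by simp)]
  conv_lhs => rw [← cfcₙ_id ℝ a]
  apply cfcₙ_congr
  intro t ht
  simp only [id]
  rw [Real.mul_self_sqrt (le_max_right _ _), Real.mul_self_sqrt (le_max_right _ _)]
  rcases le_total t 0 with h | h
  · rw [max_eq_right h, max_eq_left (by linarith)]; ring
  · rw [max_eq_left h, max_eq_right (by linarith)]; ring

lemma smul_comm_complex (f : C(X, ℂ)) (c : ℂ) (v : A) : f • (c • v) = c • (f • v) := by
  have hprod : ∀ x y : A, f • (c • (x * y)) = c • (f • (x * y)) := by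
    intro x y
    calc f • (c • (x * y)) = f • ((c • x) * y) := by rw [smul_mul_assoc]
      _ = (c • x) * (f • y) := (mul_smul_comm f (c • x) y).symm
      _ = c • (x * (f • y)) := smul_mul_assoc c x (f • y)
      _ = c • (f • (x * y)) := by rw [mul_smul_comm]
  obtain ⟨y₁, z₁, hx⟩ := sq_decomp ((realPart v : A)) (realPart v).2
  obtain ⟨y₂, z₂, hy⟩ := sq_decomp ((imaginaryPart v : A)) (imaginaryPart v).2
  have hv : v = y₁ * y₁ - z₁ * z₁ + ((Complex.I • y₂) * y₂ - (Complex.I • z₂) * z₂) := by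
    conv_lhs => rw [← realPart_add_I_smul_imaginaryPart v]
    rw [hx, hy, smul_sub, smul_mul_assoc, smul_mul_assoc]
  rw [hv]
  simp only [smul_add, smul_sub]
  rw [hprod, hprod, hprod, hprod]

section Q

variable {ι : Type*} [Fintype ι]

lemma qcore (α : ι → C(X, ℂ)) (hα : ∀ i, IsNN (α i)) (hsum : ∀ z, ∑ i, (α i z).re ≤ 1)
    (d : ι → A) :
    ∃ p ∈ SOS A, star (∑ i, α i • d i) * (∑ i, α i • d i) + p
      = ∑ i, α i • (star (d i) * d i) := by
  classical
  set σf : C(X, ℂ) := ∑ i, α i with hσf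
  have hone : IsNN (1 - σf) := by
    intro z
    have him : (σf z).im = 0 := by
      rw [hσf, ContinuousMap.sum_apply, Complex.im_sum]
      exact Finset.sum_eq_zero fun i _ => (hα i z).1
    have hre : (σf z).re ≤ 1 := by
      rw [hσf, ContinuousMap.sum_apply, Complex.re_sum]
      exact hsum z
    constructor
    · simp [him]
    · simp [hre]
  have hstar : ∀ i, star (α i) = α i := by
    intro i
    ext z
    rw [ContinuousMap.star_apply]
    exact Complex.conj_eq_iff_im.mpr (hα i z).1
  set s : A := ∑ i, α i • d i with hs
  have hss : star s * s = ∑ i, ∑ j, (α i * α j) • (star (d i) * d j) := by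
    have hstars : star s = ∑ i, α i • star (d i) := by
      rw [hs, star_sum]
      exact Finset.sum_congr rfl fun i _ => by rw [star_smul, hstar]
    rw [hstars, hs, Finset.sum_mul_sum]
    refine Finset.sum_congr rfl fun i _ => Finset.sum_congr rfl fun j _ => ?_
    rw [smul_mul_assoc, mul_smul_comm, smul_smul]
  set h : ι → ι → C(X, ℂ) := fun i j => (2⁻¹ : ℂ) • (α i * α j) with hh
  have hhsymm : ∀ i j, h j i = h i j := fun i j => by simp [hh, mul_comm]
  have hhNN : ∀ i j, IsNN (h i j) := fun i j => isNN_half (isNN_mul (hα i) (hα j))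
  set r : ι → C(X, ℂ) := fun i => α i * (1 - σf) with hr
  have hrNN : ∀ i, IsNN (r i) := fun i => isNN_mul (hα i) hone
  set p : A := (∑ i, ∑ j, h i j • (star (d i - d j) * (d i - d j)))
    + ∑ i, r i • (star (d i) * d i) with hp
  refine ⟨p, ?_, ?_⟩
  · apply AddSubmonoid.add_mem
    · exact AddSubmonoid.sum_mem _ fun i _ => AddSubmonoid.sum_mem _ fun j _ =>
        smul_sq_mem_SOS (hhNN i j) _
    · exact AddSubmonoid.sum_mem _ fun i _ => smul_sq_mem_SOS (hrNN i) _
  -- now the identity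
  have hdouble : ∀ (c : C(X, ℂ)) (w : A), ((2⁻¹ : ℂ) • c) • w + ((2⁻¹ : ℂ) • c) • w = c • w := by
    intro c w
    rw [← add_smul, ← add_smul]
    norm_num
  have expand : ∀ i j, h i j • (star (d i - d j) * (d i - d j))
      = (h i j • (star (d i) * d i) + h i j • (star (d j) * d j))
        - h i j • (star (d i) * d j) - h i j • (star (d j) * d i) := by
    intro i j
    have e : star (d i - d j) * (d i - d j)
        = (star (d i) * d i + star (d j) * d j) - star (d i) * d j - star (d j) * d i := by
      rw [star_sub]
      noncomm_ring
    rw [e, smul_sub, smul_sub, smul_add]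
  have swapgen : ∀ (F : ι → ι → A), (∀ i j, F i j = F j i) →
      ∑ i, ∑ j, h i j • F i j = ∑ i, ∑ j, h i j • F j i := by
    intro F hF
    rw [Finset.sum_comm]
    exact Finset.sum_congr rfl fun i _ => Finset.sum_congr rfl fun j _ => by
      rw [hhsymm, hF]
  have doubled : ∀ (F : ι → ι → A),
      (∑ i, ∑ j, h i j • F i j) + (∑ i, ∑ j, h i j • F i j)
        = ∑ i, ∑ j, (α i * α j) • F i j := by
    intro F
    rw [← Finset.sum_add_distrib]
    refine Finset.sum_congr rfl fun i _ => ?_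
    rw [← Finset.sum_add_distrib]
    refine Finset.sum_congr rfl fun j _ => ?_
    show ((2⁻¹ : ℂ) • (α i * α j)) • F i j + ((2⁻¹ : ℂ) • (α i * α j)) • F i j
      = (α i * α j) • F i j
    exact hdouble _ _
  -- part1 analysis
  have part1 : ∑ i, ∑ j, h i j • (star (d i - d j) * (d i - d j))
      = (∑ i, (α i * σf) • (star (d i) * d i)) - star s * s := by
    have e1 : ∑ i, ∑ j, h i j • (star (d i - d j) * (d i - d j))
        = ((∑ i, ∑ j, h i j • (star (d i) * d i)) + ∑ i, ∑ j, h i j • (star (d j) * d j))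
          - (∑ i, ∑ j, h i j • (star (d i) * d j)) - ∑ i, ∑ j, h i j • (star (d j) * d i) := by
      simp only [expand, Finset.sum_sub_distrib, Finset.sum_add_distrib]
    have e2 : ∑ i, ∑ j, h i j • (star (d j) * d j) = ∑ i, ∑ j, h i j • (star (d i) * d i) := by
      rw [Finset.sum_comm]
      exact Finset.sum_congr rfl fun i _ => Finset.sum_congr rfl fun j _ => by rw [hhsymm]
    have e3 : ∑ i, ∑ j, h i j • (star (d j) * d i) = ∑ i, ∑ j, h i j • (star (d i) * d j) := by
      rw [Finset.sum_comm]
      exact Finset.sum_congr rfl fun i _ => Finset.sum_congr rfl fun j _ => by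
        rw [hhsymm]
    have e4 : (∑ i, ∑ j, h i j • (star (d i) * d i)) + (∑ i, ∑ j, h i j • (star (d i) * d i))
        = ∑ i, (α i * σf) • (star (d i) * d i) := by
      rw [doubled]
      refine Finset.sum_congr rfl fun i _ => ?_
      rw [← Finset.sum_smul]
      congr 1
      rw [hσf, Finset.mul_sum]
    have e5 : (∑ i, ∑ j, h i j • (star (d i) * d j)) + (∑ i, ∑ j, h i j • (star (d i) * d j))
        = star s * s := by
      rw [doubled, hss]
    calc ∑ i, ∑ j, h i j • (star (d i - d j) * (d i - d j))
        = ((∑ i, ∑ j, h i j • (star (d i) * d i)) + ∑ i, ∑ j, h i j • (star (d j) * d j))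
          - (∑ i, ∑ j, h i j • (star (d i) * d j)) - ∑ i, ∑ j, h i j • (star (d j) * d i) := e1
      _ = ((∑ i, ∑ j, h i j • (star (d i) * d i)) + ∑ i, ∑ j, h i j • (star (d i) * d i))
          - ((∑ i, ∑ j, h i j • (star (d i) * d j)) + ∑ i, ∑ j, h i j • (star (d i) * d j)) := by
          rw [e2, e3]; abel
      _ = (∑ i, (α i * σf) • (star (d i) * d i)) - star s * s := by rw [e4, e5]
  have part2 : ∑ i, r i • (star (d i) * d i)
      = (∑ i, α i • (star (d i) * d i)) - ∑ i, (α i * σf) • (star (d i) * d i) := by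
    rw [← Finset.sum_sub_distrib]
    refine Finset.sum_congr rfl fun i _ => ?_
    rw [← sub_smul]
    congr 1
    show α i * (1 - σf) = α i - α i * σf
    rw [mul_sub, mul_one]
  rw [hp, part1, part2]
  abel

lemma qstep (α : ι → C(X, ℂ)) (hα : ∀ i, IsNN (α i)) (hsum : ∀ z, ∑ i, (α i z).re ≤ 1)
    (d : ι → A) :
    ‖∑ i, α i • d i‖ ^ 2 ≤ ‖∑ i, α i • (star (d i) * d i)‖ := by
  obtain ⟨p, hp, hid⟩ := qcore α hα hsum d
  calc ‖∑ i, α i • d i‖ ^ 2 = ‖star (∑ i, α i • d i) * (∑ i, α i • d i)‖ := by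
        rw [CStarRing.norm_star_mul_self, sq]
    _ ≤ ‖star (∑ i, α i • d i) * (∑ i, α i • d i) + p‖ := norm_star_mul_self_le_add _ hp
    _ = ‖∑ i, α i • (star (d i) * d i)‖ := by rw [hid]

lemma qfinal (α : ι → C(X, ℂ)) (hα : ∀ i, IsNN (α i)) (hsum : ∀ z, ∑ i, (α i z).re ≤ 1)
    (d : ι → A) (M : ℝ) (hM : 0 ≤ M) (hd : ∀ i, ‖d i‖ ≤ M) :
    ‖∑ i, α i • d i‖ ≤ M := by
  classical
  have hα1 : ∀ i, ‖α i‖ ≤ 1 := by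
    intro i
    refine (ContinuousMap.norm_le _ zero_le_one).mpr fun z => ?_
    have h1 : ‖α i z‖ = (α i z).re := by
      rw [Complex.norm_def, Complex.normSq_apply, (hα i z).1]
      simp only [mul_zero, add_zero]
      rw [Real.sqrt_mul_self (hα i z).2]
    rw [h1]
    calc (α i z).re ≤ ∑ j, (α j z).re :=
          Finset.single_le_sum (fun j _ => (hα j z).2) (Finset.mem_univ i)
      _ ≤ 1 := hsum z
  set D : ℕ → ι → A := fun k => Nat.rec d (fun _ e i => star (e i) * e i) k with hD
  have hD0 : D 0 = d := rfl
  have hDsucc : ∀ k i, D (k+1) i = star (D k i) * D k i := fun k i => rfl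
  have hDnorm : ∀ k i, ‖D k i‖ ≤ M ^ (2^k) := by
    intro k
    induction k with
    | zero => intro i; rw [hD0]; simpa using hd i
    | succ k ih =>
      intro i
      rw [hDsucc, CStarRing.norm_star_mul_self]
      calc ‖D k i‖ * ‖D k i‖ ≤ M ^ (2^k) * M ^ (2^k) :=
            mul_le_mul (ih i) (ih i) (norm_nonneg _) (le_trans (norm_nonneg _) (ih i))
        _ = M ^ (2^(k+1)) := by rw [← pow_add]; congr 1; rw [pow_succ]; ring
  have hiter : ∀ k, ‖∑ i, α i • d i‖ ^ (2^k) ≤ ‖∑ i, α i • (D k i)‖ := by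
    intro k
    induction k with
    | zero => simp [hD0]
    | succ k ih =>
      have e1 : (2:ℕ)^(k+1) = 2^k * 2 := by rw [pow_succ]
      rw [e1, pow_mul]
      calc (‖∑ i, α i • d i‖ ^ (2^k)) ^ 2 ≤ ‖∑ i, α i • (D k i)‖ ^ 2 :=
            pow_le_pow_left₀ (by positivity) ih 2
        _ ≤ ‖∑ i, α i • (star (D k i) * D k i)‖ := qstep α hα hsum (D k)
        _ = ‖∑ i, α i • (D (k+1) i)‖ := by simp [hDsucc]
  have hbound : ∀ k, ‖∑ i, α i • (D k i)‖ ≤ (Fintype.card ι) * M ^ (2^k) := by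
    intro k
    calc ‖∑ i, α i • (D k i)‖ ≤ ∑ i, ‖α i • (D k i)‖ := norm_sum_le _ _
      _ ≤ ∑ i, M ^ (2^k) := Finset.sum_le_sum fun i _ =>
          le_trans (norm_smul_le_one (α i) (hα1 i) _) (hDnorm k i)
      _ = (Fintype.card ι) * M ^ (2^k) := by
        rw [Finset.sum_const, Finset.card_univ, nsmul_eq_mul]
  have hcomb : ∀ k, ‖∑ i, α i • d i‖ ^ (2^k) ≤ (Fintype.card ι) * M ^ (2^k) :=
    fun k => le_trans (hiter k) (hbound k)
  by_contra hcon
  push_neg at hcon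
  rcases eq_or_lt_of_le hM with hM0 | hMpos
  · have := hcomb 0
    simp only [pow_zero, pow_one, ← hM0, mul_zero] at this
    have := le_antisymm this (norm_nonneg _)
    rw [this] at hcon
    exact absurd hcon (by rw [← hM0]; exact lt_irrefl 0)
  · set r : ℝ := ‖∑ i, α i • d i‖ / M with hrdef
    have hr1 : 1 < r := (one_lt_div hMpos).mpr hcon
    have hrk : ∀ k : ℕ, r ^ k ≤ (Fintype.card ι) := by
      intro k
      have hMk : (0:ℝ) < M ^ (2^k) := pow_pos hMpos _
      calc r ^ k ≤ r ^ (2^k) := pow_le_pow_right₀ hr1.le (Nat.lt_two_pow_self (n := k)).le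
        _ = ‖∑ i, α i • d i‖ ^ (2^k) / M ^ (2^k) := by rw [hrdef, div_pow]
        _ ≤ ((Fintype.card ι) * M ^ (2^k)) / M ^ (2^k) :=
            div_le_div_of_nonneg_right (hcomb k) hMk.le
        _ = (Fintype.card ι) := by field_simp
    obtain ⟨k, hk⟩ := pow_unbounded_of_one_lt ((Fintype.card ι) : ℝ) hr1
    exact absurd (hrk k) (not_le.mpr hk)

end Q

/-- Localization: an ideal element at `x` can be replaced by one vanishing on a
neighborhood of `x`. -/
lemma rloc (x : X) (w j : A) (hj : j ∈ fiberIdeal ({x} : Set X) A) (δ : ℝ)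
    (hδ : ‖w + j‖ < δ) :
    ∃ V : Set X, IsOpen V ∧ x ∈ V ∧ ∃ j' : A, ‖w + j'‖ < δ ∧
      ∀ α : C(X, ℂ), (∀ z, z ∉ V → α z = 0) → α • j' = 0 := by
  classical
  set η : ℝ := δ - ‖w + j‖ with hηdef
  have hη : 0 < η := by simp [hηdef]; linarith
  rw [fiberIdeal, Metric.mem_closure_iff] at hj
  obtain ⟨y, hyspan, hjy⟩ := hj (η/3) (by positivity)
  rw [dist_eq_norm] at hjy
  rw [SetLike.mem_coe, Submodule.mem_span_set'] at hyspan
  obtain ⟨m, lam, g, hgsum⟩ := hyspan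
  have hgS : ∀ i : Fin m, ∃ (f : C(X, ℂ)) (c : A), f x = 0 ∧ (g i : A) = f • c := by
    intro i
    obtain ⟨f, c, hf, he⟩ := (g i).2
    exact ⟨f, c, hf x rfl, he⟩
  choose F C hF hFC using hgS
  have hyeq : y = ∑ i, lam i • (F i • C i) := by
    rw [← hgsum]
    exact Finset.sum_congr rfl fun i _ => by rw [hFC]
  set φ : X → ℝ := fun z => ∑ i, ‖lam i‖ * ‖F i z‖ * ‖C i‖ with hφ
  have hφcont : Continuous φ := by
    apply continuous_finset_sum
    intro i _
    exact (continuous_const.mul ((F i).continuous.norm)).mul continuous_const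
  have hφx : φ x = 0 := by
    rw [hφ]
    refine Finset.sum_eq_zero fun i _ => by rw [hF]; simp
  set ε₁ : ℝ := η / (3 * (m + 1)) with hε₁
  have hε₁pos : 0 < ε₁ := by positivity
  set W : Set X := φ ⁻¹' (Set.Iio ε₁) with hW
  have hWopen : IsOpen W := (isOpen_Iio).preimage hφcont
  have hxW : x ∈ W := by
    simp only [hW, Set.mem_preimage, Set.mem_Iio, hφx]
    exact hε₁pos
  obtain ⟨V, hVopen, hxV, hVsub⟩ := normal_exists_closure_subset (isClosed_singleton (x := x))
    hWopen (Set.singleton_subset_iff.mpr hxW)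
  obtain ⟨χ, hχ0, hχ1, hχ01⟩ := exists_continuous_zero_one_of_isClosed
    (hWopen.isClosed_compl) (isClosed_closure (s := V))
    (Set.disjoint_left.mpr fun z hz hz' => hz (hVsub hz'))
  set χc : C(X, ℂ) := ⟨fun z => ((χ z : ℝ) : ℂ), Complex.continuous_ofReal.comp χ.continuous⟩
    with hχc
  refine ⟨V, hVopen, Set.singleton_subset_iff.mp hxV,
    ∑ i, lam i • (((1 - χc) * F i) • C i), ?_, ?_⟩
  · -- norm estimate
    set j' : A := ∑ i, lam i • (((1 - χc) * F i) • C i) with hj'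
    have hyj' : y - j' = ∑ i, lam i • ((χc * F i) • C i) := by
      rw [hyeq, hj', ← Finset.sum_sub_distrib]
      refine Finset.sum_congr rfl fun i _ => ?_
      rw [← smul_sub, ← sub_smul]
      congr 2
      ring
    have hterm : ∀ i : Fin m, ‖lam i • ((χc * F i) • C i)‖ ≤ ε₁ := by
      intro i
      have h1 : ‖lam i • ((χc * F i) • C i)‖ ≤ ‖lam i‖ * (‖χc * F i‖ * ‖C i‖) := by
        rw [norm_smul]
        exact mul_le_mul_of_nonneg_left (norm_smul_le' _ _) (norm_nonneg _)
      rcases eq_or_lt_of_le (mul_nonneg (norm_nonneg (lam i)) (norm_nonneg (C i))) with h0 | hpos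
      · -- ‖lam i‖ * ‖C i‖ = 0
        have : ‖lam i‖ * (‖χc * F i‖ * ‖C i‖) = ‖χc * F i‖ * (‖lam i‖ * ‖C i‖) := by ring
        rw [this, ← h0, mul_zero] at h1
        exact le_trans h1 hε₁pos.le
      · have hptwise : ∀ z, ‖(χc * F i) z‖ ≤ ε₁ / (‖lam i‖ * ‖C i‖) := by
          intro z
          by_cases hzW : z ∈ W
          · have hφz : φ z < ε₁ := hzW
            have hterm' : ‖lam i‖ * ‖F i z‖ * ‖C i‖ ≤ φ z := by
              have hzz : φ z = ∑ k, ‖lam k‖ * ‖F k z‖ * ‖C k‖ := rfl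
              rw [hzz]
              exact Finset.single_le_sum (f := fun k => ‖lam k‖ * ‖F k z‖ * ‖C k‖)
                (fun k _ => by positivity) (Finset.mem_univ i)
            have hχz : ‖χc z‖ ≤ 1 := by
              simp only [hχc, ContinuousMap.coe_mk, Complex.norm_real, Real.norm_eq_abs]
              rw [abs_of_nonneg (hχ01 z).1]
              exact (hχ01 z).2
            have key2 : (‖lam i‖ * ‖C i‖) * ‖(χc * F i) z‖ ≤ ε₁ := by
              have e : ‖(χc * F i) z‖ = ‖χc z‖ * ‖F i z‖ := by
                rw [ContinuousMap.mul_apply, norm_mul]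
              have h5 : ‖χc z‖ * ‖F i z‖ ≤ ‖F i z‖ := by
                nlinarith [norm_nonneg (F i z), norm_nonneg (χc z)]
              calc (‖lam i‖ * ‖C i‖) * ‖(χc * F i) z‖
                  ≤ (‖lam i‖ * ‖C i‖) * ‖F i z‖ := by
                    rw [e]; exact mul_le_mul_of_nonneg_left h5 (by positivity)
                _ = ‖lam i‖ * ‖F i z‖ * ‖C i‖ := by ring
                _ ≤ φ z := hterm'
                _ ≤ ε₁ := hφz.le
            rw [le_div_iff₀ hpos, mul_comm]
            exact key2
          · have : χ z = 0 := hχ0 hzW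
            simp only [ContinuousMap.mul_apply, hχc, ContinuousMap.coe_mk, this,
              Complex.ofReal_zero, zero_mul, norm_zero]
            positivity
        have hnorm : ‖χc * F i‖ ≤ ε₁ / (‖lam i‖ * ‖C i‖) := by
          refine (ContinuousMap.norm_le _ (by positivity)).mpr hptwise
        calc ‖lam i • ((χc * F i) • C i)‖ ≤ ‖lam i‖ * (‖χc * F i‖ * ‖C i‖) := h1
          _ ≤ ‖lam i‖ * ((ε₁ / (‖lam i‖ * ‖C i‖)) * ‖C i‖) := by
              gcongr
          _ = ε₁ * ((‖lam i‖ * ‖C i‖) / (‖lam i‖ * ‖C i‖)) := by ring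
          _ = ε₁ := by rw [div_self (ne_of_gt hpos), mul_one]
    have hyj'norm : ‖y - j'‖ ≤ m * ε₁ := by
      rw [hyj']
      calc ‖∑ i, lam i • ((χc * F i) • C i)‖ ≤ ∑ i : Fin m, ‖lam i • ((χc * F i) • C i)‖ :=
            norm_sum_le _ _
        _ ≤ ∑ _i : Fin m, ε₁ := Finset.sum_le_sum fun i _ => hterm i
        _ = m * ε₁ := by rw [Finset.sum_const, Finset.card_univ, Fintype.card_fin, nsmul_eq_mul]
    have hme : (m : ℝ) * ε₁ ≤ η / 3 := by
      have hm1 : (0:ℝ) < (m:ℝ) + 1 := by positivity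
      rw [hε₁]
      have e : (m:ℝ) * (η / (3 * ((m:ℝ) + 1))) = (η / 3) * ((m:ℝ) / ((m:ℝ) + 1)) := by
        field_simp
      rw [e]
      have h2 : (m:ℝ) / ((m:ℝ) + 1) ≤ 1 := by
        rw [div_le_one hm1]; linarith
      nlinarith [hη]
    have hjy' : j - y = j - y := rfl
    have hdecomp : w + j' = (w + j) - (j - y) - (y - j') := by abel
    calc ‖w + j'‖ = ‖(w + j) - (j - y) - (y - j')‖ := by rw [hdecomp]
      _ ≤ ‖(w + j) - (j - y)‖ + ‖y - j'‖ := norm_sub_le _ _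
      _ ≤ (‖w + j‖ + ‖j - y‖) + ‖y - j'‖ := by
          have := norm_sub_le (w + j) (j - y)
          gcongr
      _ ≤ (‖w + j‖ + η/3) + η/3 :=
          add_le_add (add_le_add le_rfl hjy.le) (le_trans hyj'norm hme)
      _ < δ := by
          have he : η = δ - ‖w + j‖ := hηdef
          linarith
  · -- vanishing property
    intro α hα
    rw [Finset.smul_sum]
    refine Finset.sum_eq_zero fun i _ => ?_
    rw [smul_comm_complex, smul_smul]
    have : α * ((1 - χc) * F i) = 0 := by
      ext z
      by_cases hzV : z ∈ V
      · have : χ z = 1 := hχ1 (subset_closure hzV)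
        simp [hχc, this]
      · simp [hα z hzV]
    rw [this, zero_smul, smul_zero]

theorem stmt13 (B : NonUnitalStarSubalgebra ℂ A) (hBclosed : IsClosed (B : Set A))
    (hBmod : ∀ (f : C(X, ℂ)) (b : A), b ∈ B → f • b ∈ B)
    (a : A) (δ : ℝ) (hδ : 0 < δ)
    (h : ∀ x : X, ∃ b ∈ B, ∃ j ∈ fiberIdeal ({x} : Set X) A, ‖a - b + j‖ < δ) :
    ∃ b ∈ B, ‖a - b‖ < δ := by
  classical
  by_cases hX : IsEmpty X
  · -- A is trivial
    have h10 : (1 : C(X, ℂ)) = 0 := by ext z; exact (hX.false z).elim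
    have ha : a = 0 := by
      calc a = (1 : C(X, ℂ)) • a := (one_smul _ _).symm
        _ = (0 : C(X, ℂ)) • a := by rw [h10]
        _ = 0 := zero_smul _ _
    exact ⟨0, zero_mem B, by simp [ha, hδ]⟩
  rw [not_isEmpty_iff] at hX
  -- localize at each point
  have hloc : ∀ x : X, ∃ V : Set X, IsOpen V ∧ x ∈ V ∧ ∃ b ∈ B, ∃ j' : A,
      ‖a - b + j'‖ < δ ∧ ∀ α : C(X, ℂ), (∀ z, z ∉ V → α z = 0) → α • j' = 0 := by
    intro x
    obtain ⟨b, hb, j, hjmem, hj⟩ := h x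
    obtain ⟨V, hVo, hxV, j', hj', hvan⟩ := rloc x (a - b) j hjmem δ hj
    exact ⟨V, hVo, hxV, b, hb, j', hj', hvan⟩
  choose V hVopen hxV bx hbx jx hjx hvanx using hloc
  -- finite subcover
  obtain ⟨t, ht⟩ := isCompact_univ.elim_finite_subcover V hVopen
    (fun z _ => Set.mem_iUnion.mpr ⟨z, hxV z⟩)
  have htne : t.Nonempty := by
    rcases Finset.eq_empty_or_nonempty t with rfl | hne
    · exfalso
      obtain ⟨z⟩ := hX
      have := ht (Set.mem_univ z)
      simpa using this
    · exact hne
  -- partition of unity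
  have hcover : (Set.univ : Set X) ⊆ ⋃ i : {y // y ∈ t}, V i := by
    intro z hz
    obtain ⟨i, hit, hzi⟩ := Set.mem_iUnion₂.mp (ht hz)
    exact Set.mem_iUnion.mpr ⟨⟨i, hit⟩, hzi⟩
  obtain ⟨f, hfsub⟩ := PartitionOfUnity.exists_isSubordinate isClosed_univ
    (fun i : {y // y ∈ t} => V i) (fun i => hVopen i) hcover
  set α : {y // y ∈ t} → C(X, ℂ) := fun i =>
    ⟨fun z => ((f i z : ℝ) : ℂ), Complex.continuous_ofReal.comp (f i).continuous⟩ with hα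
  have hαNN : ∀ i, IsNN (α i) := by
    intro i z
    simp only [hα, ContinuousMap.coe_mk]
    exact ⟨by simp, by simpa using f.nonneg i z⟩
  have hαsumz : ∀ z, ∑ i, (α i z).re = 1 := by
    intro z
    have := f.sum_eq_one (Set.mem_univ z)
    rw [finsum_eq_sum_of_fintype] at this
    simpa [hα] using this
  have hαsum1 : (∑ i, α i) = (1 : C(X, ℂ)) := by
    ext z
    rw [ContinuousMap.sum_apply]
    have him : (∑ i, α i z).im = 0 := by
      rw [Complex.im_sum]
      exact Finset.sum_eq_zero fun i _ => (hαNN i z).1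
    have hre : (∑ i, α i z).re = 1 := by
      rw [Complex.re_sum]; exact hαsumz z
    simp only [ContinuousMap.one_apply]
    exact Complex.ext (by simpa using hre) (by simpa using him)
  set b : A := ∑ i, α i • bx i with hb
  have hbB : b ∈ B := sum_mem fun i _ => hBmod _ _ (hbx (i : X))
  refine ⟨b, hbB, ?_⟩
  set wfun : {y // y ∈ t} → A := fun i => a - bx i + jx i with hwfun
  have hab : a - b = ∑ i, α i • wfun i := by
    have hsplit : ∑ i, α i • wfun i
        = (∑ i, α i • a) - (∑ i, α i • bx i) + ∑ i, α i • jx i := by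
      rw [← Finset.sum_sub_distrib, ← Finset.sum_add_distrib]
      refine Finset.sum_congr rfl fun i _ => ?_
      show α i • (a - bx (i : X) + jx (i : X)) = _
      rw [smul_add, smul_sub]
    have hsa : ∑ i, α i • a = a := by
      rw [← Finset.sum_smul, hαsum1, one_smul]
    have hsj : ∑ i, α i • jx i = 0 := by
      refine Finset.sum_eq_zero fun i _ => ?_
      apply hvanx
      intro z hz
      have hf0 : f i z = 0 := by
        by_contra hne
        exact hz (hfsub i (subset_closure (Function.mem_support.mpr hne)))
      simp [hα, hf0]
    rw [hsplit, hsa, hsj, hb, add_zero]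
  rw [hab]
  set M : ℝ := t.attach.sup' (by simpa using htne) fun i => ‖wfun i‖ with hM
  have hMlt : M < δ := by
    rw [hM]
    apply Finset.sup'_lt_iff (by simpa using htne) |>.mpr
    intro i _
    exact hjx i
  have hM0 : 0 ≤ M := by
    obtain ⟨i0, hi0⟩ := htne
    calc (0:ℝ) ≤ ‖wfun ⟨i0, hi0⟩‖ := norm_nonneg _
      _ ≤ M := Finset.le_sup' (f := fun i => ‖wfun i‖) (Finset.mem_attach t ⟨i0, hi0⟩)
  have := qfinal α hαNN (fun z => (hαsumz z).le) wfun M hM0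
    (fun i => Finset.le_sup' (f := fun k => ‖wfun k‖) (Finset.mem_attach t i))
  calc ‖∑ i, α i • wfun i‖ ≤ M := this
    _ < δ := hMlt
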